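/- Let g_j, g_0 be continuous Riemannian metrics on a compact m-manifold M such that g_j ≥ (1 − 1/j)·g_0 and ‖g_j‖_{L^{m/2}_{g_0}(M)} → ‖g_0‖_{L^{m/2}_{g_0}(M)}. Then for any measurable set U ⊂ M, Vol_{g_j}(U) → Vol_{g_0}(U). -/

import Mathlib

open MeasureTheory Matrix Filter
open scoped ENNReal

/-- The pointwise norm `|A|_{g_0}` of a metric expressed in a `g₀`-orthonormal frame:
the Frobenius norm of its matrix of coefficients. -/
noncomputable def tensorNorm {m : ℕ} (A : Matrix (Fin m) (Fin m) ℝ) : ℝ :=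
  Real.sqrt (∑ i, ∑ k, (A i k) ^ 2)

/-- The Riemannian volume of a measurable set `U` with respect to a metric `g`,
expressed in a `g₀`-orthonormal frame with background measure `μ = dV_{g₀}`. -/
noncomputable def riemVol {M : Type*} [MeasurableSpace M] (μ : Measure M)
    {m : ℕ} (g : M → Matrix (Fin m) (Fin m) ℝ) (U : Set M) : ℝ≥0∞ :=
  ∫⁻ x in U, ENNReal.ofReal (Real.sqrt (g x).det) ∂μ

lemma sqrt_pow_half (m : ℕ) {t : ℝ} (ht : 0 ≤ t) : t ^ ((m:ℝ)/2) = Real.sqrt (t ^ m) := by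
  rw [Real.sqrt_eq_rpow, ← Real.rpow_natCast t m, ← Real.rpow_mul ht]
  ring_nf

lemma trace_sq_eq {m : ℕ} (A : Matrix (Fin m) (Fin m) ℝ) (hA : A.IsHermitian) :
    (A * A).trace = ∑ i, hA.eigenvalues i ^ 2 := by
  conv_lhs => rw [hA.spectral_theorem, Unitary.conjStarAlgAut_apply]
  rw [Matrix.trace_mul_comm]
  rw [show ((hA.eigenvectorUnitary : Matrix (Fin m) (Fin m) ℝ) * diagonal (RCLike.ofReal ∘ hA.eigenvalues)
      * (star (hA.eigenvectorUnitary : Matrix (Fin m) (Fin m) ℝ))) *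
      ((hA.eigenvectorUnitary : Matrix (Fin m) (Fin m) ℝ) * diagonal (RCLike.ofReal ∘ hA.eigenvalues)
      * (star (hA.eigenvectorUnitary : Matrix (Fin m) (Fin m) ℝ)))
      = (hA.eigenvectorUnitary : Matrix (Fin m) (Fin m) ℝ) * (diagonal (RCLike.ofReal ∘ hA.eigenvalues) * diagonal (RCLike.ofReal ∘ hA.eigenvalues))
      * (star (hA.eigenvectorUnitary : Matrix (Fin m) (Fin m) ℝ)) from by
    rw [mul_assoc, mul_assoc, mul_assoc, mul_assoc]
    congr 1
    rw [← mul_assoc (star (hA.eigenvectorUnitary : Matrix (Fin m) (Fin m) ℝ)),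
      (Matrix.mem_unitaryGroup_iff').mp (hA.eigenvectorUnitary).2, one_mul, ← mul_assoc]]
  rw [Matrix.trace_mul_comm, ← mul_assoc, (Matrix.mem_unitaryGroup_iff').mp (hA.eigenvectorUnitary).2, one_mul,
    Matrix.diagonal_mul_diagonal, Matrix.trace_diagonal]
  simp [sq]

lemma frob_eq_trace_sq {m : ℕ} (A : Matrix (Fin m) (Fin m) ℝ) (hA : A.IsHermitian) :
    ∑ i, ∑ k, (A i k)^2 = (A * A).trace := by
  rw [Matrix.trace]
  refine Finset.sum_congr rfl fun i _ => ?_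
  rw [Matrix.diag, Matrix.mul_apply]
  refine Finset.sum_congr rfl fun k _ => ?_
  rw [sq]
  congr 1
  simpa using congrFun (congrFun hA k) i

lemma amgm {m : ℕ} (lam : Fin m → ℝ) (h : ∀ i, 0 ≤ lam i) :
    ∏ i, lam i ≤ ((∑ i, lam i) / m) ^ m := by
  rcases Nat.eq_zero_or_pos m with hm | hm
  · subst hm; simp
  have key := Real.geom_mean_le_arith_mean_weighted Finset.univ (fun _ => 1 / (m:ℝ)) lam
    (fun i _ => by positivity)
    (by simp [Finset.card_univ]; field_simp)
    (fun i _ => h i)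
  have h1 : ∏ i, lam i = (∏ i, lam i ^ (1/(m:ℝ))) ^ m := by
    rw [← Finset.prod_pow]
    refine Finset.prod_congr rfl fun i _ => ?_
    rw [← Real.rpow_natCast (lam i ^ (1/(m:ℝ))) m, ← Real.rpow_mul (h i)]
    field_simp
    simp
  rw [h1]
  have h2 : ∑ i, (1/(m:ℝ)) * lam i = (∑ i, lam i) / m := by
    rw [Finset.sum_div]
    exact Finset.sum_congr rfl fun i _ => by ring
  rw [h2] at key
  exact pow_le_pow_left₀ (Finset.prod_nonneg (fun i _ => Real.rpow_nonneg (h i) _)) key m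

lemma eig_lb {m : ℕ} (A : Matrix (Fin m) (Fin m) ℝ) (hA : A.IsHermitian) (c : ℝ)
    (h : ∀ v : Fin m → ℝ, c * (v ⬝ᵥ v) ≤ v ⬝ᵥ A.mulVec v) (i : Fin m) :
    c ≤ hA.eigenvalues i := by
  set v : Fin m → ℝ := ⇑(hA.eigenvectorBasis i) with hv
  have hvne : v ≠ 0 := by
    intro hz
    exact hA.eigenvectorBasis.orthonormal.ne_zero i (by ext k; exact congrFun hz k)
  have hvv : 0 < v ⬝ᵥ v := by
    obtain ⟨k, hk⟩ := Function.ne_iff.mp hvne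
    exact Finset.sum_pos' (fun j _ => mul_self_nonneg _)
      ⟨k, Finset.mem_univ k, mul_self_pos.mpr (by simpa using hk)⟩
  have hAv : v ⬝ᵥ A.mulVec v = hA.eigenvalues i * (v ⬝ᵥ v) := by
    rw [hA.mulVec_eigenvectorBasis i, dotProduct_smul, smul_eq_mul]
  have := h v
  rw [hAv] at this
  exact le_of_mul_le_mul_right this hvv

lemma det_upper {m : ℕ} (hm : 0 < m) {A : Matrix (Fin m) (Fin m) ℝ} (hA : A.PosSemidef) :
    Real.sqrt A.det ≤ tensorNorm A ^ ((m:ℝ)/2) / Real.sqrt ((Real.sqrt m)^m) := by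
  have hl : ∀ i, 0 ≤ hA.1.eigenvalues i := hA.eigenvalues_nonneg
  have hdet : A.det = ∏ i, hA.1.eigenvalues i := by
    simpa using hA.1.det_eq_prod_eigenvalues
  have htn : tensorNorm A = Real.sqrt (∑ i, hA.1.eigenvalues i ^ 2) := by
    unfold tensorNorm
    rw [frob_eq_trace_sq A hA.1, trace_sq_eq A hA.1]
  have htn0 : (0:ℝ) ≤ tensorNorm A := Real.sqrt_nonneg _
  have hsum_sq : ∑ i, hA.1.eigenvalues i ^ 2 = tensorNorm A ^ 2 := by
    rw [htn, Real.sq_sqrt]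
    positivity
  have hmpos : (0:ℝ) < m := Nat.cast_pos.mpr hm
  have hS : (∑ i, hA.1.eigenvalues i) ≤ Real.sqrt m * tensorNorm A := by
    have h1 : (∑ i, hA.1.eigenvalues i)^2 ≤ (m:ℝ) * ∑ i, hA.1.eigenvalues i^2 := by
      simpa using sq_sum_le_card_mul_sum_sq (s := Finset.univ) (f := hA.1.eigenvalues)
    have h2 : (∑ i, hA.1.eigenvalues i)^2 ≤ (Real.sqrt m * tensorNorm A)^2 := by
      rw [mul_pow, Real.sq_sqrt hmpos.le]
      rw [hsum_sq] at h1
      exact h1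
    exact (pow_le_pow_iff_left₀ (Finset.sum_nonneg fun i _ => hl i)
      (by positivity) (two_ne_zero)).mp h2
  have hdet2 : A.det ≤ (tensorNorm A / Real.sqrt m)^m := by
    rw [hdet]
    refine (amgm _ hl).trans ?_
    refine pow_le_pow_left₀
      (div_nonneg (Finset.sum_nonneg fun i _ => hl i) hmpos.le) ?_ m
    calc (∑ i, hA.1.eigenvalues i)/(m:ℝ) ≤ (Real.sqrt m * tensorNorm A)/(m:ℝ) := by
          gcongr
      _ = tensorNorm A / Real.sqrt m := by
          rw [div_eq_div_iff hmpos.ne' (Real.sqrt_pos.mpr hmpos).ne']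
          linear_combination tensorNorm A * Real.mul_self_sqrt hmpos.le
  calc Real.sqrt A.det ≤ Real.sqrt ((tensorNorm A / Real.sqrt m)^m) := Real.sqrt_le_sqrt hdet2
    _ = tensorNorm A ^ ((m:ℝ)/2) / Real.sqrt ((Real.sqrt m)^m) := by
        rw [div_pow, Real.sqrt_div (by positivity), sqrt_pow_half m htn0]

/-- Let `g_j, g_0` be continuous Riemannian metrics on a compact `m`-manifold
(expressed in a `g₀`-orthonormal frame, so `g₀ = 1` and `μ = dV_{g₀}`) with
`g_j ≥ (1 − 1/j) g_0` and `‖g_j‖_{L^{m/2}_{g_0}} → ‖g_0‖_{L^{m/2}_{g_0}}`.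
Then for any measurable set `U`, `Vol_{g_j}(U) → Vol_{g_0}(U)`. -/
theorem vol_convergence_of_lhalfm_norm_convergence
    {M : Type*} [TopologicalSpace M] [CompactSpace M]
    [MeasurableSpace M] [OpensMeasurableSpace M]
    (μ : Measure M) [IsFiniteMeasure μ]
    {m : ℕ} (hm : 0 < m) (g : ℕ → M → Matrix (Fin m) (Fin m) ℝ)
    (g0 : M → Matrix (Fin m) (Fin m) ℝ) (hg0 : ∀ x, g0 x = 1)
    (hcont : ∀ j, Continuous (g j))
    (hpos : ∀ j x, (g j x).PosSemidef)
    (hlow : ∀ (j : ℕ) (x : M) (v : Fin m → ℝ),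
      (1 - 1 / (j : ℝ)) * (v ⬝ᵥ (g0 x).mulVec v) ≤ v ⬝ᵥ (g j x).mulVec v)
    (hnorm : Tendsto
      (fun j => ∫⁻ x, ENNReal.ofReal (tensorNorm (g j x) ^ ((m : ℝ) / 2)) ∂μ) atTop
      (nhds (∫⁻ x, ENNReal.ofReal (tensorNorm (g0 x) ^ ((m : ℝ) / 2)) ∂μ))) :
    ∀ U : Set M, MeasurableSet U →
      Tendsto (fun j => riemVol μ (g j) U) atTop (nhds (riemVol μ g0 U)) := by
  intro U hU
  have hmpos : (0:ℝ) < m := Nat.cast_pos.mpr hm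
  set D : ℝ := Real.sqrt ((Real.sqrt m)^m) with hDdef
  have hDpos : 0 < D := Real.sqrt_pos.mpr (pow_pos (Real.sqrt_pos.mpr hmpos) m)
  set N : ℕ → ℝ≥0∞ := fun j => ∫⁻ x, ENNReal.ofReal (tensorNorm (g j x) ^ ((m : ℝ) / 2)) ∂μ with hN
  -- the value of the limit norm integral
  have htn1 : ∀ x, tensorNorm (g0 x) ^ ((m:ℝ)/2) = D := by
    intro x
    rw [hg0 x]
    have h1 : tensorNorm (1 : Matrix (Fin m) (Fin m) ℝ) = Real.sqrt m := by
      unfold tensorNorm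
      congr 1
      have : ∀ i : Fin m, ∑ k, ((1 : Matrix (Fin m) (Fin m) ℝ) i k)^2 = 1 := by
        intro i
        rw [Finset.sum_eq_single i]
        · simp [Matrix.one_apply]
        · intro k _ hk
          simp [Matrix.one_apply, (Ne.symm hk)]
        · simp
      simp [this]
    rw [h1, sqrt_pow_half m (Real.sqrt_nonneg _)]
  have hN0 : (∫⁻ x, ENNReal.ofReal (tensorNorm (g0 x) ^ ((m : ℝ) / 2)) ∂μ)
      = ENNReal.ofReal D * μ Set.univ := by
    simp only [htn1]
    rw [lintegral_const]
  -- upper bound sequence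
  have hB : Tendsto (fun j => ENNReal.ofReal D⁻¹ * N j) atTop (nhds (μ Set.univ)) := by
    have h := ENNReal.Tendsto.const_mul hnorm (Or.inr (show ENNReal.ofReal D⁻¹ ≠ ⊤ from ENNReal.ofReal_ne_top))
    rw [hN0, ← mul_assoc, ← ENNReal.ofReal_mul (inv_nonneg.mpr hDpos.le),
      inv_mul_cancel₀ hDpos.ne', ENNReal.ofReal_one, one_mul] at h
    exact h
  have hptwise : ∀ j x, ENNReal.ofReal (Real.sqrt (g j x).det)
      ≤ ENNReal.ofReal D⁻¹ * ENNReal.ofReal (tensorNorm (g j x) ^ ((m:ℝ)/2)) := by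
    intro j x
    rw [← ENNReal.ofReal_mul (inv_nonneg.mpr hDpos.le)]
    apply ENNReal.ofReal_le_ofReal
    rw [← div_eq_inv_mul]
    exact det_upper hm (hpos j x)
  have hIntle : ∀ j, (∫⁻ x, ENNReal.ofReal (Real.sqrt (g j x).det) ∂μ)
      ≤ ENNReal.ofReal D⁻¹ * N j := by
    intro j
    calc (∫⁻ x, ENNReal.ofReal (Real.sqrt (g j x).det) ∂μ)
        ≤ ∫⁻ x, ENNReal.ofReal D⁻¹ * ENNReal.ofReal (tensorNorm (g j x) ^ ((m:ℝ)/2)) ∂μ :=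
          lintegral_mono (hptwise j)
      _ = ENNReal.ofReal D⁻¹ * N j := lintegral_const_mul' _ _ ENNReal.ofReal_ne_top
  -- lower bound constants
  set c : ℕ → ℝ≥0∞ := fun j => ENNReal.ofReal (Real.sqrt ((1 - 1/(j:ℝ))^m)) with hc
  have hcj0 : ∀ j : ℕ, (0:ℝ) ≤ 1 - 1/(j:ℝ) := by
    intro j
    rcases Nat.eq_zero_or_pos j with rfl | hj
    · simp
    · have : 1/(j:ℝ) ≤ 1 := by
        rw [div_le_one (by exact_mod_cast hj)]
        exact_mod_cast hj
      linarith
  have hcle : ∀ j x, c j ≤ ENNReal.ofReal (Real.sqrt (g j x).det) := by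
    intro j x
    apply ENNReal.ofReal_le_ofReal
    apply Real.sqrt_le_sqrt
    have hH := (hpos j x).1
    have hle : ∀ i, (1 - 1/(j:ℝ)) ≤ hH.eigenvalues i := by
      refine eig_lb _ hH _ (fun v => ?_)
      have := hlow j x v
      rwa [hg0 x, Matrix.one_mulVec] at this
    have hdet : (g j x).det = ∏ i, hH.eigenvalues i := by
      simpa using hH.det_eq_prod_eigenvalues
    rw [hdet]
    calc (1-1/(j:ℝ))^m = ∏ _i : Fin m, (1-1/(j:ℝ)) := by
          rw [Finset.prod_const, Finset.card_univ, Fintype.card_fin]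
      _ ≤ ∏ i, hH.eigenvalues i :=
          Finset.prod_le_prod (fun _ _ => hcj0 j) (fun i _ => hle i)
  have hc1 : Tendsto c atTop (nhds 1) := by
    have h1 : Tendsto (fun j : ℕ => 1 - 1/(j:ℝ)) atTop (nhds 1) := by
      simpa using tendsto_const_nhds.sub (tendsto_one_div_atTop_nhds_zero_nat (𝕜 := ℝ))
    have h2 : Tendsto (fun j : ℕ => Real.sqrt ((1-1/(j:ℝ))^m)) atTop (nhds 1) := by
      have h := (h1.pow m).sqrt
      simpa using h
    have h3 : Tendsto (fun j : ℕ => ENNReal.ofReal (Real.sqrt ((1 - 1/(j:ℝ))^m))) atTop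
        (nhds (ENNReal.ofReal 1)) := ENNReal.tendsto_ofReal h2
    rw [ENNReal.ofReal_one] at h3
    exact h3
  -- rewrite the target
  have hg0vol : riemVol μ g0 U = μ U := by
    simp [riemVol, hg0]
  rw [hg0vol]
  refine tendsto_of_le_liminf_of_limsup_le ?_ ?_ (by isBoundedDefault) (by isBoundedDefault)
  · -- liminf
    have hlb : ∀ j, c j * μ U ≤ riemVol μ (g j) U := by
      intro j
      rw [riemVol]
      calc c j * μ U = ∫⁻ _x in U, c j ∂μ := by
            rw [setLIntegral_const]
        _ ≤ _ := lintegral_mono fun x => hcle j x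
    have ht : Tendsto (fun j => c j * μ U) atTop (nhds (μ U)) := by
      simpa using ENNReal.Tendsto.mul_const hc1 (Or.inl one_ne_zero)
    calc μ U = liminf (fun j => c j * μ U) atTop := ht.liminf_eq.symm
      _ ≤ liminf (fun j => riemVol μ (g j) U) atTop :=
          liminf_le_liminf (Eventually.of_forall hlb)
  · -- limsup
    have hub : ∀ j, riemVol μ (g j) U ≤ ENNReal.ofReal D⁻¹ * N j - c j * μ Uᶜ := by
      intro j
      refine ENNReal.le_sub_of_add_le_right (ENNReal.mul_ne_top ENNReal.ofReal_ne_top (measure_ne_top μ _)) ?_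
      calc riemVol μ (g j) U + c j * μ Uᶜ
          ≤ (∫⁻ x in U, ENNReal.ofReal (Real.sqrt (g j x).det) ∂μ)
            + ∫⁻ x in Uᶜ, ENNReal.ofReal (Real.sqrt (g j x).det) ∂μ := by
            have hcmp : c j * μ Uᶜ ≤ ∫⁻ x in Uᶜ, ENNReal.ofReal (Real.sqrt (g j x).det) ∂μ := by
              rw [show c j * μ Uᶜ = ∫⁻ _x in Uᶜ, c j ∂μ from (setLIntegral_const _ _).symm]
              exact lintegral_mono fun x => hcle j x
            rw [riemVol]
            gcongr
        _ = ∫⁻ x, ENNReal.ofReal (Real.sqrt (g j x).det) ∂μ :=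
            lintegral_add_compl _ hU
        _ ≤ ENNReal.ofReal D⁻¹ * N j := hIntle j
    have hcu : Tendsto (fun j => c j * μ Uᶜ) atTop (nhds (μ Uᶜ)) := by
      simpa using ENNReal.Tendsto.mul_const hc1 (Or.inl one_ne_zero)
    have hsub : Tendsto (fun j => ENNReal.ofReal D⁻¹ * N j - c j * μ Uᶜ) atTop
        (nhds (μ Set.univ - μ Uᶜ)) :=
      ENNReal.Tendsto.sub hB hcu (Or.inl (measure_ne_top μ _))
    have huniv : μ Set.univ - μ Uᶜ = μ U := by
      rw [measure_compl hU (measure_ne_top μ U),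
        ENNReal.sub_sub_cancel (measure_ne_top μ _) (measure_mono (Set.subset_univ U))]
    calc limsup (fun j => riemVol μ (g j) U) atTop
        ≤ limsup (fun j => ENNReal.ofReal D⁻¹ * N j - c j * μ Uᶜ) atTop :=
          limsup_le_limsup (Eventually.of_forall hub)
      _ = μ U := by rw [hsub.limsup_eq, huniv]
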